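/- arXiv:1511.01441 — 3 statements merged into one kernel-verified Lean document; each statement's English description precedes it below -/
import Mathlib

section
/- Fix integers b ≥ 2, e ≥ 1, u ≥ 1, and let g be a positive integer such that every nonnegative integer is the sum of g e-th powers of nonnegative integers. Then there exists a positive integer x with S_{e,b}(x) = u whose number of base-b digits is at most ⌊u/(b-1)^e⌋ + g; concretely, x < b^(⌊u/(b-1)^e⌋ + g). -/
/-- `S e b x` is the sum of the `e`-th powers of the base-`b` digits of `x`. -/
def S (e b x : ℕ) : ℕ := ((Nat.digits b x).map (fun a => a ^ e)).sum

lemma filter_pow_sum (e : ℕ) (he : 1 ≤ e) :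
    ∀ L : List ℕ, (((L.filter (· ≠ 0)).map (fun a => a ^ e)).sum
      = (L.map (fun a => a ^ e)).sum) := by
  intro L
  induction L with
  | nil => rfl
  | cons a t ih =>
    rw [List.filter_cons]
    split_ifs with h
    · rw [List.map_cons, List.sum_cons, ih]; rfl
    · have ha : a = 0 := by simpa using h
      subst ha
      rw [List.map_cons, List.sum_cons, Nat.zero_pow (by omega : 0 < e), Nat.zero_add]
      exact ih

theorem stmt_0 (b e u g : ℕ) (hb : 2 ≤ b) (he : 1 ≤ e) (hu : 1 ≤ u) (hg : 1 ≤ g)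
    (hwaring : ∀ m : ℕ, ∃ f : Fin g → ℕ, ∑ i, (f i) ^ e = m) :
    ∃ x : ℕ, 0 < x ∧ S e b x = u ∧
      (Nat.digits b x).length ≤ u / (b - 1) ^ e + g ∧
      x < b ^ (u / (b - 1) ^ e + g) := by
  set q := u / (b - 1) ^ e with hq
  set r := u % (b - 1) ^ e with hr
  have hbpos : 0 < (b - 1) ^ e := Nat.pow_pos (by omega)
  have hrlt : r < (b - 1) ^ e := Nat.mod_lt _ hbpos
  obtain ⟨f, hf⟩ := hwaring r
  -- each f i < b - 1
  have hflt : ∀ i, f i < b - 1 := by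
    intro i
    have h1 : f i ^ e ≤ r := hf ▸ Finset.single_le_sum (f := fun j => f j ^ e)
      (fun j _ => Nat.zero_le _) (Finset.mem_univ i)
    have h2 : f i ^ e < (b - 1) ^ e := lt_of_le_of_lt h1 hrlt
    exact lt_of_pow_lt_pow_left₀ e (Nat.zero_le _) h2
  set L0 := (List.ofFn f).filter (· ≠ 0) with hL0
  set L := L0 ++ List.replicate q (b - 1) with hL
  -- all elements of L are < b and ≠ 0
  have hmem : ∀ l ∈ L, l < b ∧ l ≠ 0 := by
    intro l hl
    rw [hL, List.mem_append] at hl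
    rcases hl with hl | hl
    · rw [hL0, List.mem_filter] at hl
      obtain ⟨hl1, hl2⟩ := hl
      rw [List.mem_ofFn] at hl1
      obtain ⟨i, rfl⟩ := hl1
      exact ⟨lt_trans (hflt i) (by omega), by simpa using hl2⟩
    · rw [List.eq_of_mem_replicate hl]
      omega
  -- the sum of e-th powers over L is u
  have hsum : (L.map (fun a => a ^ e)).sum = u := by
    rw [hL, List.map_append, List.sum_append, hL0, filter_pow_sum e he]
    have h1 : ((List.ofFn f).map (fun a => a ^ e)).sum = r := by
      rw [List.map_ofFn, List.sum_ofFn]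
      simpa using hf
    have h2 : ((List.replicate q (b - 1)).map (fun a => a ^ e)).sum = q * (b - 1) ^ e := by
      simp [List.map_replicate, List.sum_replicate, smul_eq_mul]
    rw [h1, h2, add_comm, mul_comm]
    exact Nat.div_add_mod u ((b - 1) ^ e)
  -- L is nonempty
  have hLne : L ≠ [] := by
    intro h
    rw [h] at hsum
    simp at hsum
    omega
  have hdig : Nat.digits b (Nat.ofDigits b L) = L := by
    apply Nat.digits_ofDigits b (by omega) L (fun l hl => (hmem l hl).1)
    intro h
    exact (hmem _ (List.getLast_mem h)).2
  refine ⟨Nat.ofDigits b L, ?_, ?_, ?_, ?_⟩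
  · rcases Nat.eq_zero_or_pos (Nat.ofDigits b L) with h0 | h0
    · exfalso
      rw [h0, Nat.digits_zero] at hdig
      exact hLne hdig.symm
    · exact h0
  · rw [S, hdig, hsum]
  · rw [hdig, hL, List.length_append, List.length_replicate]
    have : L0.length ≤ g := by
      calc L0.length ≤ (List.ofFn f).length := List.length_filter_le _ _
        _ = g := by simp
    omega
  · have hx : Nat.ofDigits b L < b ^ L.length :=
      Nat.ofDigits_lt_base_pow_length (by omega : 1 < b) (fun l hl => (hmem l hl).1)
    refine lt_of_lt_of_le hx (Nat.pow_le_pow_right (by omega) ?_)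
    rw [hL, List.length_append, List.length_replicate]
    have : L0.length ≤ g := by
      calc L0.length ≤ (List.ofFn f).length := List.length_filter_le _ _
        _ = g := by simp
    omega
end

section
/- Fix integers b ≥ 2, e ≥ 1, u ≥ 1, a positive integer h, and let g be a positive integer such that every nonnegative integer is the sum of g e-th powers of nonnegative integers. Suppose σ is the least height-h, u-attracted number for base b and exponent e, and τ is the least height-h, u-attracted number strictly greater than σ. If σ + g·(b-1)^e ≤ τ, then the least height-(h+1), u-attracted number σ' exists and satisfies S_{e,b}(σ') = σ. -/
/-- `x` is a height-`h`, `u`-attracted number for base `b` and exponent `e`. -/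
def IsHeightAttracted (e b u h x : ℕ) : Prop :=
  0 < x ∧ (S e b)^[h] x = u ∧ ∀ n < h, (S e b)^[n] x ≠ u

lemma S_zero (e b : ℕ) : S e b 0 = 0 := by simp [S]

lemma S_rec {b : ℕ} (hb : 2 ≤ b) (e : ℕ) {z : ℕ} (hz : 0 < z) :
    S e b z = (z % b) ^ e + S e b (z / b) := by
  unfold S
  rw [Nat.digits_def' (by omega : 1 < b) hz]
  simp

lemma S_pos {b e : ℕ} (hb : 2 ≤ b) (he : 1 ≤ e) : ∀ z, 0 < z → 0 < S e b z := by
  intro z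
  induction z using Nat.strong_induction_on with
  | _ z ih =>
    intro hz
    rw [S_rec hb e hz]
    rcases Nat.eq_zero_or_pos (z % b) with h0 | h0
    · have hdvd : b ∣ z := Nat.dvd_of_mod_eq_zero h0
      have h1 : 0 < z / b := Nat.div_pos (Nat.le_of_dvd hz hdvd) (by omega)
      have := ih (z / b) (Nat.div_lt_self hz (by omega)) h1
      omega
    · have := pow_pos h0 e
      omega

lemma S_le {b e : ℕ} (hb : 2 ≤ b) : ∀ N z, z < b ^ N → S e b z ≤ N * (b - 1) ^ e := by
  intro N
  induction N with
  | zero =>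
    intro z hz
    have hz0 : z = 0 := by simpa using hz
    subst hz0; simp [S_zero]
  | succ N ih =>
    intro z hz
    rcases Nat.eq_zero_or_pos z with rfl | hz0
    · simp [S_zero]
    rw [S_rec hb e hz0]
    have h1 : z % b ≤ b - 1 := by have := Nat.mod_lt z (show 0 < b by omega); omega
    have h2 : (z % b) ^ e ≤ (b - 1) ^ e := Nat.pow_le_pow_left h1 e
    have h3 : z / b < b ^ N := by
      rw [Nat.div_lt_iff_lt_mul (by omega : 0 < b)]
      calc z < b ^ (N + 1) := hz
        _ = b ^ N * b := by ring
    have h4 := ih (z / b) h3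
    have : (N + 1) * (b - 1) ^ e = N * (b - 1) ^ e + (b - 1) ^ e := by ring
    omega

lemma S_le_div {b e : ℕ} (hb : 2 ≤ b) (he : 1 ≤ e) :
    ∀ N z, z < b ^ (N + 1) → S e b z ≤ N * (b - 1) ^ e + (z / b ^ N) ^ e := by
  intro N
  induction N with
  | zero =>
    intro z hz
    rcases Nat.eq_zero_or_pos z with rfl | hz0
    · simp [S_zero]
    · rw [S_rec hb e hz0]
      have h1 : z % b = z := Nat.mod_eq_of_lt (by simpa using hz)
      have h2 : z / b = 0 := Nat.div_eq_of_lt (by simpa using hz)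
      simp [h1, h2, S_zero]
  | succ N ih =>
    intro z hz
    rcases Nat.eq_zero_or_pos z with rfl | hz0
    · simp [S_zero]
    rw [S_rec hb e hz0]
    have h2 : (z % b) ^ e ≤ (b - 1) ^ e :=
      Nat.pow_le_pow_left (by have := Nat.mod_lt z (show 0 < b by omega); omega) e
    have h3 : z / b < b ^ (N + 1) := by
      rw [Nat.div_lt_iff_lt_mul (by omega : 0 < b)]
      calc z < b ^ (N + 2) := hz
        _ = b ^ (N + 1) * b := by ring
    have h4 := ih (z / b) h3
    have h5 : z / b / b ^ N = z / b ^ (N + 1) := by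
      rw [Nat.div_div_eq_div_mul, ← pow_succ']
    rw [h5] at h4
    have : (N + 1) * (b - 1) ^ e = N * (b - 1) ^ e + (b - 1) ^ e := by ring
    omega

lemma S_max {b e : ℕ} (hb : 2 ≤ b) (he : 1 ≤ e) :
    ∀ N z, z < b ^ N → N * (b - 1) ^ e ≤ S e b z → z = b ^ N - 1 := by
  intro N
  induction N with
  | zero => intro z hz _; simpa using hz
  | succ N ih =>
    intro z hz hS
    have hM1 : 1 ≤ (b - 1) ^ e := Nat.one_le_pow _ _ (by omega)
    rcases Nat.eq_zero_or_pos z with rfl | hz0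
    · rw [S_zero] at hS
      have : (N + 1) * (b - 1) ^ e = N * (b - 1) ^ e + (b - 1) ^ e := by ring
      omega
    rw [S_rec hb e hz0] at hS
    have h3 : z / b < b ^ N := by
      rw [Nat.div_lt_iff_lt_mul (by omega : 0 < b)]
      calc z < b ^ (N + 1) := hz
        _ = b ^ N * b := by ring
    have h4 : S e b (z / b) ≤ N * (b - 1) ^ e := S_le hb N _ h3
    have hexp : (N + 1) * (b - 1) ^ e = N * (b - 1) ^ e + (b - 1) ^ e := by ring
    have h5 : (b - 1) ^ e ≤ (z % b) ^ e := by omega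
    have h6 : z % b = b - 1 := by
      have hlt := Nat.mod_lt z (show 0 < b by omega)
      by_contra hne
      have : z % b < b - 1 := by omega
      have := Nat.pow_lt_pow_left this (show e ≠ 0 by omega)
      omega
    have h8 : N * (b - 1) ^ e ≤ S e b (z / b) := by rw [h6] at hS; omega
    have h9 := ih (z / b) h3 h8
    have hdm := Nat.div_add_mod z b
    obtain ⟨k, hk⟩ : ∃ k, b ^ N = k + 1 := ⟨b ^ N - 1, by have := Nat.one_le_pow N b (by omega); omega⟩
    have hzb : z / b = k := by omega
    have hBsucc : b ^ (N + 1) = b * k + b := by rw [pow_succ, hk]; ring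
    rw [hzb] at hdm
    omega

lemma ge_of_S_gt {b e N z : ℕ} (hb : 2 ≤ b) (h : N * (b - 1) ^ e < S e b z) : b ^ N ≤ z := by
  by_contra hlt
  push_neg at hlt
  have := S_le (e := e) hb N z hlt
  omega

lemma digits_of_valid {b : ℕ} (hb : 2 ≤ b) {L : List ℕ} (hL : ∀ c ∈ L, 0 < c ∧ c < b) :
    Nat.digits b (Nat.ofDigits b L) = L := by
  apply Nat.digits_ofDigits b (by omega) L (fun l hl => (hL l hl).2)
  intro hne
  have := hL _ (List.getLast_mem hne)
  omega

lemma S_ofDigits {b : ℕ} (e : ℕ) (hb : 2 ≤ b) {L : List ℕ} (hL : ∀ c ∈ L, 0 < c ∧ c < b) :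
    S e b (Nat.ofDigits b L) = (L.map (fun a => a ^ e)).sum := by
  unfold S; rw [digits_of_valid hb hL]

lemma S_mul_base {b e : ℕ} (hb : 2 ≤ b) (he : 1 ≤ e) {z : ℕ} (hz : 0 < z) :
    S e b (b * z) = S e b z := by
  rw [S_rec hb e (by positivity), Nat.mul_mod_right, Nat.mul_div_cancel_left z (show 0 < b by omega),
    zero_pow (show e ≠ 0 by omega), zero_add]

lemma repl_identity {b : ℕ} (hb : 2 ≤ b) (d : ℕ) :
    ∀ n, (b - 1) * Nat.ofDigits b (List.replicate n d) + d = d * b ^ n := by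
  obtain ⟨b', rfl⟩ : ∃ b', b = b' + 1 := ⟨b - 1, by omega⟩
  intro n
  induction n with
  | zero => simp
  | succ n ih =>
    rw [List.replicate_succ, Nat.ofDigits_cons, pow_succ]
    simp only [Nat.add_sub_cancel] at ih ⊢
    calc b' * (↑d + (↑b' + 1) * Nat.ofDigits (b' + 1) (List.replicate n d)) + d
        = (b' + 1) * (b' * Nat.ofDigits (b' + 1) (List.replicate n d) + d) := by ring
      _ = (b' + 1) * (d * (b' + 1) ^ n) := by rw [ih]
      _ = d * ((b' + 1) ^ n * (b' + 1)) := by ring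

lemma sum_map_filter_ne_zero (e : ℕ) (he : 1 ≤ e) :
    ∀ L : List ℕ, (((L.filter (fun c => c ≠ 0)).map (fun a => a ^ e)).sum) = ((L.map (fun a => a ^ e)).sum) := by
  intro L
  induction L with
  | nil => rfl
  | cons a L ih =>
    by_cases ha : a = 0
    · subst ha
      simpa [List.filter_cons, zero_pow (show e ≠ 0 by omega)] using ih
    · simpa [List.filter_cons, ha] using ih

lemma e_eq_one_of_g_one {e g : ℕ} (he : 1 ≤ e) (hg : g = 1)
    (hwaring : ∀ m : ℕ, ∃ f : Fin g → ℕ, ∑ i, (f i) ^ e = m) : e = 1 := by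
  subst hg
  obtain ⟨f, hf⟩ := hwaring 2
  rw [Fin.sum_univ_one] at hf
  by_contra h1
  have he2 : 2 ≤ e := by omega
  rcases Nat.lt_or_ge (f 0) 2 with h2 | h2
  · have h0 : f 0 = 0 ∨ f 0 = 1 := by omega
    rcases h0 with h0 | h0 <;> rw [h0] at hf <;>
      simp [zero_pow (show e ≠ 0 by omega)] at hf
  · have h3 : 2 ^ e ≤ (f 0) ^ e := Nat.pow_le_pow_left h2 e
    have h4 : 2 ^ 2 ≤ 2 ^ e := Nat.pow_le_pow_right (by omega) he2
    norm_num at h4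
    omega

theorem stmt_2 (b e u g h σ τ : ℕ) (hb : 2 ≤ b) (he : 1 ≤ e) (hu : 1 ≤ u) (hg : 1 ≤ g)
    (hh : 1 ≤ h)
    (hwaring : ∀ m : ℕ, ∃ f : Fin g → ℕ, ∑ i, (f i) ^ e = m)
    (hσ : IsHeightAttracted e b u h σ)
    (hσmin : ∀ z : ℕ, IsHeightAttracted e b u h z → σ ≤ z)
    (hτ : IsHeightAttracted e b u h τ) (hστ : σ < τ)
    (hτmin : ∀ z : ℕ, IsHeightAttracted e b u h z → σ < z → τ ≤ z)
    (hgap : σ + g * (b - 1) ^ e ≤ τ) :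
    ∃ σ' : ℕ, IsHeightAttracted e b u (h + 1) σ' ∧
      (∀ z : ℕ, IsHeightAttracted e b u (h + 1) z → σ' ≤ z) ∧
      S e b σ' = σ := by
  classical
  have hb1 : 1 < b := by omega
  set M := (b - 1) ^ e with hM_def
  have hM1 : 1 ≤ M := Nat.one_le_pow _ _ (by omega)
  have hσpos : 0 < σ := hσ.1
  have hune : σ ≠ u := by
    have := hσ.2.2 0 (by omega)
    simpa using this
  -- attracted criterion
  have hattr : ∀ y : ℕ, S e b y = σ → y ≠ u → IsHeightAttracted e b u (h + 1) y := by
    intro y hy hyu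
    have hypos : 0 < y := by
      rcases Nat.eq_zero_or_pos y with rfl | hp
      · rw [S_zero] at hy; omega
      · exact hp
    refine ⟨hypos, ?_, ?_⟩
    · rw [Function.iterate_succ_apply, hy]; exact hσ.2.1
    · intro n hn
      rcases Nat.eq_zero_or_pos n with rfl | hn0
      · simpa using hyu
      · obtain ⟨m, rfl⟩ : ∃ m, n = m + 1 := ⟨n - 1, by omega⟩
        rw [Function.iterate_succ_apply, hy]
        exact hσ.2.2 m (by omega)
  -- construction of a number with digit power sum σ
  obtain ⟨f, hf⟩ := hwaring (σ % M)
  set G : List ℕ := (List.ofFn f).filter (fun c => c ≠ 0) with hG_def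
  have hGsum : (G.map (fun a => a ^ e)).sum = σ % M := by
    rw [hG_def, sum_map_filter_ne_zero e he, List.map_ofFn, List.sum_ofFn]
    exact hf
  have hGmem : ∀ c ∈ G, 0 < c ∧ c < b - 1 := by
    intro c hc
    have hc0 : c ≠ 0 := by
      have := List.of_mem_filter hc
      simpa using this
    have hce : c ^ e ≤ σ % M := by
      rw [← hGsum]
      exact List.single_le_sum (by simp) _ (List.mem_map_of_mem hc)
    have hmod : σ % M < M := Nat.mod_lt _ (by omega)
    refine ⟨by omega, ?_⟩
    by_contra hge
    push_neg at hge
    have := Nat.pow_le_pow_left (show b - 1 ≤ c by omega) e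
    rw [← hM_def] at this
    omega
  have hGlen : G.length ≤ g := le_trans (List.length_filter_le _ _) (by simp)
  set q := σ / M with hq_def
  set s := G.length with hs_def
  set L : List ℕ := G ++ List.replicate q (b - 1) with hL_def
  have hLmem : ∀ c ∈ L, 0 < c ∧ c < b := by
    intro c hc
    rcases List.mem_append.mp hc with hmem | hmem
    · have := hGmem c hmem; omega
    · have := List.eq_of_mem_replicate hmem; omega
  have hqM : M * q + σ % M = σ := Nat.div_add_mod σ M
  have hLsum : (L.map (fun a => a ^ e)).sum = σ := by
    rw [hL_def, List.map_append, List.sum_append, hGsum, List.map_replicate,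
      List.sum_replicate, smul_eq_mul, ← hM_def]
    have : M * q = q * M := Nat.mul_comm M q
    omega
  have hLlen : L.length = s + q := by simp [hL_def, hs_def]
  set x := Nat.ofDigits b L with hx_def
  have hxdig : Nat.digits b x = L := digits_of_valid hb hLmem
  have hxS : S e b x = σ := by rw [hx_def, S_ofDigits e hb hLmem]; exact hLsum
  have hxlt : x < b ^ (s + q) := by
    rw [← hLlen, hx_def]
    exact Nat.ofDigits_lt_base_pow_length hb1 (fun _ hm => (hLmem _ hm).2)
  have hxpos : 0 < x := by
    rcases Nat.eq_zero_or_pos x with hx0 | hp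
    · rw [hx0, S_zero] at hxS; omega
    · exact hp
  have hbxS : S e b (b * x) = σ := by rw [S_mul_base hb he hxpos, hxS]
  have hbx_gt : x < b * x := by
    calc x = 1 * x := (one_mul x).symm
      _ < b * x := (Nat.mul_lt_mul_right hxpos).mpr hb1
  have hexists : ∃ z, IsHeightAttracted e b u (h + 1) z := by
    by_cases hxu : x = u
    · exact ⟨b * x, hattr _ hbxS (by omega)⟩
    · exact ⟨x, hattr _ hxS hxu⟩
  refine ⟨Nat.find hexists, Nat.find_spec hexists,
    fun z hz => Nat.find_min' hexists hz, ?_⟩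
  set σ' := Nat.find hexists with hσ'_def
  have hP' : IsHeightAttracted e b u (h + 1) σ' := Nat.find_spec hexists
  have hmin : ∀ z, IsHeightAttracted e b u (h + 1) z → σ' ≤ z :=
    fun z hz => Nat.find_min' hexists hz
  have hnot : ∀ y, y < σ' → ¬ IsHeightAttracted e b u (h + 1) y :=
    fun y hy => Nat.find_min hexists hy
  set t := S e b σ' with ht_def
  have htA : IsHeightAttracted e b u h t := by
    refine ⟨S_pos hb he σ' hP'.1, ?_, ?_⟩
    · have := hP'.2.1; rwa [Function.iterate_succ_apply] at this
    · intro n hn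
      have := hP'.2.2 (n + 1) (by omega)
      rwa [Function.iterate_succ_apply] at this
  have hσt : σ ≤ t := hσmin t htA
  by_contra hne
  have hτt : τ ≤ t := hτmin t htA (by omega)
  have ht_ge : σ + g * M ≤ t := le_trans hgap hτt
  have contra1 : ∀ y, S e b y = σ → y ≠ u → y < σ' → False :=
    fun y h1 h2 h3 => hnot y h3 (hattr y h1 h2)
  have contra2 : ∀ y₁ y₂ : ℕ, y₁ ≠ y₂ → S e b y₁ = σ → S e b y₂ = σ →
      y₁ < σ' → y₂ < σ' → False := by
    intro y₁ y₂ hne12 h1 h2 hl1 hl2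
    by_cases hy : y₁ = u
    · exact contra1 y₂ h2 (by omega) hl2
    · exact contra1 y₁ h1 hy hl1
  -- two-arrangement helper
  have two_arr : ∀ (c a' : ℕ) (T : List ℕ), L = a' :: T → c ∈ L → c ≠ a' →
      L.length * M < t → False := by
    intro c a' T hLT hcL hca hble
    have hble' : b ^ L.length ≤ σ' := by
      apply ge_of_S_gt hb
      rw [← hM_def, ← ht_def]
      exact hble
    set L₂ := c :: L.erase c with hL2_def
    have hperm : L.Perm L₂ := List.perm_cons_erase hcL
    have hL2mem : ∀ d ∈ L₂, 0 < d ∧ d < b := fun d hd => hLmem d (hperm.mem_iff.mpr hd)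
    have hL2sum : (L₂.map (fun a => a ^ e)).sum = σ := by
      rw [← hLsum]
      exact ((hperm.map _).sum_eq).symm
    set y := Nat.ofDigits b L₂ with hy_def
    have hydig : Nat.digits b y = L₂ := digits_of_valid hb hL2mem
    have hyS : S e b y = σ := by rw [hy_def, S_ofDigits e hb hL2mem]; exact hL2sum
    have hylen : L₂.length = L.length := by
      have h1 : (L.erase c).length = L.length - 1 := List.length_erase_of_mem hcL
      have h2 : 1 ≤ L.length := by rw [hLT]; simp
      simp [hL2_def, h1]
      omega
    have hylt : y < b ^ L.length := by
      rw [← hylen, hy_def]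
      exact Nat.ofDigits_lt_base_pow_length hb1 (fun _ hm => (hL2mem _ hm).2)
    have hxy : x ≠ y := by
      intro hxyeq
      have hLL2 : L = L₂ := by rw [← hxdig, ← hydig, hxyeq]
      rw [hLT, hL2_def] at hLL2
      injection hLL2 with h1 h2
      exact hca h1.symm
    have hxlt2 : x < b ^ L.length := by rw [hLlen]; exact hxlt
    exact contra2 x y hxy hxS hyS (lt_of_lt_of_le hxlt2 hble')
      (lt_of_lt_of_le hylt hble')
  by_cases hs0 : s = 0
  · -- G empty : σ = q * M, L = replicate q (b-1)
    have hGnil : G = [] := List.length_eq_zero_iff.mp hs0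
    have hr0 : σ % M = 0 := by rw [← hGsum, hGnil]; simp
    have hq1 : 1 ≤ q := by
      rcases Nat.eq_zero_or_pos q with hq | hq
      · rw [hq] at hqM; omega
      · exact hq
    have hσ'ge : b ^ (q + g - 1) ≤ σ' := by
      apply ge_of_S_gt hb
      rw [← hM_def, ← ht_def]
      have h1 : (q + g - 1) * M < (q + g) * M := by
        have : q + g - 1 < q + g := by omega
        exact (Nat.mul_lt_mul_right hM1).mpr this
      have h2 : (q + g) * M = M * q + g * M := by ring
      omega
    have hxq : x < b ^ q := by
      have := hxlt; rw [hs0] at this; simpa using this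
    have hpowle : b ^ q ≤ b ^ (q + g - 1) := Nat.pow_le_pow_right (by omega) (by omega)
    by_cases hxu : x = u
    · by_cases hg2 : 2 ≤ g
      · -- use b * x
        have hbxlt : b * x < b ^ (q + 1) := by
          rw [pow_succ, mul_comm (b ^ q) b]
          exact (Nat.mul_lt_mul_left (show 0 < b by omega)).mpr hxq
        have hple : b ^ (q + 1) ≤ b ^ (q + g - 1) := Nat.pow_le_pow_right (by omega) (by omega)
        exact contra1 (b * x) hbxS (by omega)
          (lt_of_lt_of_le hbxlt (le_trans hple hσ'ge))
      · -- g = 1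
        have hg1 : g = 1 := by omega
        have hqM' : q * M + σ % M = σ := by rw [mul_comm q M]; exact hqM
        have hxval : x = b ^ q - 1 := by
          apply S_max hb he q x hxq
          rw [hxS, ← hM_def]
          omega
        have hσ'le : σ' ≤ b * x := hmin _ (hattr _ hbxS (by omega))
        obtain ⟨k, hk⟩ : ∃ k, b ^ q = k + 1 :=
          ⟨b ^ q - 1, by have := Nat.one_le_pow q b (by omega); omega⟩
        have hxk : x = k := by omega
        have hB : b ^ (q + 1) = b * k + b := by rw [pow_succ, hk]; ring
        have hbxk : b * x = b * k := by rw [hxk]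
        have hσ'lt : σ' < b ^ (q + 1) := by omega
        have hgM : g * M = M := by rw [hg1, one_mul]
        have ht2 : (q + 1) * M ≤ t := by
          have : (q + 1) * M = M * q + M := by ring
          omega
        have hfin := S_max hb he (q + 1) σ' hσ'lt (by rw [← ht_def, ← hM_def]; omega)
        omega
    · exact contra1 x hxS hxu (lt_of_lt_of_le (lt_of_lt_of_le hxq hpowle) hσ'ge)
  · -- s ≥ 1
    obtain ⟨a, G', hGcons⟩ : ∃ a G', G = a :: G' := by
      cases hGc : G with
      | nil => exact absurd (by rw [hs_def, hGc]; rfl) hs0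
      | cons a G' => exact ⟨a, G', rfl⟩
    have haG : a ∈ G := by rw [hGcons]; exact List.mem_cons_self
    have ha := hGmem a haG
    have hr1 : 1 ≤ σ % M := by
      have h1 : a ^ e ≤ σ % M := by
        rw [← hGsum]
        exact List.single_le_sum (by simp) _ (List.mem_map_of_mem haG)
      have h2 : 1 ≤ a ^ e := Nat.one_le_pow _ _ ha.1
      omega
    have hs1 : 1 ≤ s := by omega
    by_cases hq0 : q = 0
    · -- L = G
      have hLG : L = G := by rw [hL_def, hq0]; simp
      by_cases hconst : ∀ c ∈ L, c = a
      · -- L is replicate s a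
        have hLrep : L = List.replicate L.length a := List.eq_replicate_of_mem hconst
        have hLlen' : L.length = s := by rw [hLlen, hq0]; omega
        have hσ_eq : σ = s * a ^ e := by
          rw [← hLsum]
          conv_lhs => rw [hLrep]
          rw [List.map_replicate, List.sum_replicate, smul_eq_mul, hLlen']
        by_cases hsg : s < g
        · have hσ'ge : b ^ (s + 1) ≤ σ' := by
            apply ge_of_S_gt hb
            rw [← hM_def, ← ht_def]
            have h1 : (s + 1) * M ≤ g * M := Nat.mul_le_mul_right M (by omega)
            omega
          have hxs : x < b ^ s := by
            have := hxlt; rw [hq0] at this; simpa using this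
          have hbxlt : b * x < b ^ (s + 1) := by
            rw [pow_succ, mul_comm (b ^ s) b]
            exact (Nat.mul_lt_mul_left (show 0 < b by omega)).mpr hxs
          exact contra2 x (b * x) (by omega) hxS hbxS
            (lt_of_lt_of_le (lt_of_lt_of_le hxs (Nat.pow_le_pow_right (by omega) (by omega))) hσ'ge)
            (lt_of_lt_of_le hbxlt hσ'ge)
        · have hsg' : s = g := by omega
          have hσ'ge : b ^ g ≤ σ' := by
            apply ge_of_S_gt hb
            rw [← hM_def, ← ht_def]
            omega
          have hxg : x < b ^ g := by
            have := hxlt; rw [hq0, hsg'] at this; simpa using this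
          by_cases hxu : x = u
          · -- fine analysis
            have hσ'le : σ' ≤ b * x := hmin _ (hattr _ hbxS (by omega))
            have hid : (b - 1) * x + a = a * b ^ g := by
              have : x = Nat.ofDigits b (List.replicate g a) := by
                rw [hx_def]
                conv_lhs => rw [hLrep]
                rw [hLlen', hsg']
              rw [this]
              exact repl_identity hb a g
            have hbg1 : 1 ≤ b ^ g := Nat.one_le_pow _ _ (by omega)
            have hmul1 : b * x = (b - 1) * x + x := by
              have hb' : b = (b - 1) + 1 := by omega
              calc b * x = ((b - 1) + 1) * x := by rw [← hb']
                _ = (b - 1) * x + x := by ring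
            have hmul2 : (a + 1) * b ^ g = a * b ^ g + b ^ g := by ring
            have hkey : b * x < (a + 1) * b ^ g := by omega
            have hσ'lt2 : σ' < (a + 1) * b ^ g := by omega
            have hdiv : σ' / b ^ g ≤ a := by
              have := (Nat.div_lt_iff_lt_mul (show 0 < b ^ g by omega)).mpr hσ'lt2
              omega
            have hσ'lt : σ' < b ^ (g + 1) := by
              have h1 : (a + 1) * b ^ g ≤ b * b ^ g := Nat.mul_le_mul_right _ (by omega)
              have h2 : b ^ (g + 1) = b * b ^ g := by rw [pow_succ]; ring
              omega
            have hF2 := S_le_div hb he g σ' hσ'lt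
            rw [← ht_def, ← hM_def] at hF2
            have hce : (σ' / b ^ g) ^ e ≤ a ^ e := Nat.pow_le_pow_left hdiv e
            have hσ_eq2 : σ = g * a ^ e := by rw [hσ_eq, hsg']
            have hga : g * a ^ e ≤ a ^ e := by omega
            have hae1 : 1 ≤ a ^ e := Nat.one_le_pow _ _ ha.1
            have hg1 : g = 1 := by
              have hgle : g ≤ 1 :=
                Nat.le_of_mul_le_mul_right (by rw [one_mul]; exact hga) (by omega)
              omega
            have he1 : e = 1 := e_eq_one_of_g_one he hg1 hwaring
            have hxa : x = a := by
              rw [hx_def]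
              conv_lhs => rw [hLrep]
              rw [hLlen', hsg', hg1]
              simp [Nat.ofDigits_singleton]
            have hσa : σ = a := by rw [hσ_eq, hsg', hg1, he1]; ring
            omega
          · exact contra1 x hxS hxu (lt_of_lt_of_le hxg hσ'ge)
      · push_neg at hconst
        obtain ⟨c, hcL, hca⟩ := hconst
        apply two_arr c a (G' ++ List.replicate q (b - 1))
          (by rw [hL_def, hGcons]; simp) hcL hca
        rw [hLlen, hq0]
        have h1 : g * M ≥ s * M := Nat.mul_le_mul_right M (by omega)
        have h2 : (s + 0) * M = s * M := by ring
        omega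
    · -- q ≥ 1
      apply two_arr (b - 1) a (G' ++ List.replicate q (b - 1))
        (by rw [hL_def, hGcons]; simp) ?_ (by omega) ?_
      · rw [hL_def]
        refine List.mem_append.mpr (Or.inr ?_)
        exact List.mem_replicate.mpr ⟨by omega, rfl⟩
      · rw [hLlen]
        have h1 : g * M ≥ s * M := Nat.mul_le_mul_right M (by omega)
        have h2 : (s + q) * M = s * M + q * M := by ring
        have h3 : M * q = q * M := by ring
        omega
end

section
/- Fix integers b ≥ 2, e ≥ 1, u ≥ 1, a positive integer h, and let g be a positive integer such that every nonnegative integer is the sum of g e-th powers of nonnegative integers, and let p be the least nonnegative integer with b^p > g. Suppose σ is the least height-h, u-attracted number for base b and exponent e, and suppose that σ has more than e + p base-b digits and that its digits in places 0 through e + p are all equal to b-1. Then every height-h, u-attracted number z with z ≠ σ satisfies z ≥ σ + g·(b-1)^e. -/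
lemma S_cons {b : ℕ} (e : ℕ) (hb : 2 ≤ b) {n : ℕ} (hn : 0 < n) :
    S e b n = (n % b) ^ e + S e b (n / b) := by
  rw [S, Nat.digits_def' (by omega : 1 < b) hn, List.map_cons, List.sum_cons, S]

lemma S_split {b e : ℕ} (hb : 2 ≤ b) (he : 1 ≤ e) :
    ∀ (k r a : ℕ), r < b ^ k → S e b (r + b ^ k * a) = S e b r + S e b a := by
  intro k
  induction k with
  | zero =>
    intro r a hr
    have hr0 : r = 0 := by simpa using hr
    subst hr0
    simp [S]
  | succ k ih =>
    intro r a hr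
    rcases Nat.eq_zero_or_pos a with rfl | ha
    · simp [S_zero]
    have hb0 : 0 < b := by omega
    have hbk : 0 < b ^ (k + 1) := Nat.pow_pos hb0
    have hn : 0 < r + b ^ (k + 1) * a := by positivity
    have hexp : b ^ (k + 1) * a = b * (b ^ k * a) := by ring
    have hmod : (r + b ^ (k + 1) * a) % b = r % b := by
      rw [hexp, Nat.add_mul_mod_self_left]
    have hdiv : (r + b ^ (k + 1) * a) / b = r / b + b ^ k * a := by
      rw [hexp, Nat.add_mul_div_left _ _ hb0]
    have hrb : r / b < b ^ k := by
      rw [Nat.div_lt_iff_lt_mul hb0]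
      calc r < b ^ (k + 1) := hr
        _ = b ^ k * b := by ring
    rw [S_cons e hb hn, hmod, hdiv, ih _ _ hrb]
    rcases Nat.eq_zero_or_pos r with rfl | hr0
    · simp [S_zero, zero_pow (by omega : e ≠ 0)]
    · rw [S_cons e hb hr0]; ring

lemma getD_digits {b : ℕ} (hb : 2 ≤ b) : ∀ (k n : ℕ), (Nat.digits b n).getD k 0 = n / b ^ k % b := by
  intro k
  induction k with
  | zero =>
    intro n
    rcases Nat.eq_zero_or_pos n with rfl | hn
    · simp
    · rw [Nat.digits_def' (by omega : 1 < b) hn]; simp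
  | succ k ih =>
    intro n
    rcases Nat.eq_zero_or_pos n with rfl | hn
    · simp
    · rw [Nat.digits_def' (by omega : 1 < b) hn, List.getD_cons_succ, ih (n / b),
        Nat.div_div_eq_div_mul, ← pow_succ']

lemma aux_binom (c : ℕ) : ∀ e : ℕ, 1 ≤ e → c ^ e + e * c ^ (e - 1) ≤ (c + 1) ^ e := by
  intro e
  induction e with
  | zero => omega
  | succ n ih =>
    intro _
    rcases Nat.eq_zero_or_pos n with rfl | hn
    · simp
    have h1 := ih hn
    have h2 : c ^ (n - 1) * c = c ^ n := by
      rw [← pow_succ]; congr 1; omega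
    have h3 : (c + 1) ^ (n + 1) = (c + 1) ^ n * (c + 1) := by ring
    have h4 : (c ^ n + n * c ^ (n - 1)) * (c + 1) ≤ (c + 1) ^ n * (c + 1) :=
      Nat.mul_le_mul_right _ h1
    have h5 : (c ^ n + n * c ^ (n - 1)) * (c + 1)
        = c ^ n * c + c ^ n + n * (c ^ (n - 1) * c) + n * c ^ (n - 1) := by ring
    rw [h2, ← pow_succ] at h5
    have : c ^ (n + 1) + (n + 1) * c ^ (n + 1 - 1) ≤ (c ^ n + n * c ^ (n - 1)) * (c + 1) := by
      rw [h5]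
      have : (n + 1) * c ^ (n + 1 - 1) = n * c ^ n + c ^ n := by
        simp only [Nat.add_sub_cancel]; ring
      omega
    omega

lemma two_pow_lemma : ∀ m : ℕ, 1 ≤ m → m + 3 ≤ 2 ^ (m + 1) := by
  intro m
  induction m with
  | zero => omega
  | succ n ih =>
    intro _
    rcases Nat.eq_zero_or_pos n with rfl | hn
    · norm_num
    · have h1 := ih hn
      have h2 : 2 ^ (n + 1 + 1) = 2 * 2 ^ (n + 1) := by ring
      omega

lemma key_base {b e : ℕ} (hb : 2 ≤ b) (he : 1 ≤ e) : (e + 2) * (b - 1) ^ e < b ^ (e + 1) := by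
  rcases eq_or_lt_of_le hb with h1 | h2
  · have hb1 : b - 1 = 1 := by omega
    rw [hb1, one_pow, mul_one, ← h1]
    have := two_pow_lemma e he
    omega
  · have hbc : (b - 1) + 1 = b := by omega
    have hB := aux_binom (b - 1) (e + 1) (by omega)
    rw [hbc] at hB
    have h4 : (b - 1) ^ (e + 1 - 1) = (b - 1) ^ e := by congr 1
    rw [h4] at hB
    have h5 : (b - 1) ^ e < (b - 1) ^ (e + 1) :=
      (Nat.pow_lt_pow_iff_right (by omega)).mpr (by omega)
    have h6 : (e + 2) * (b - 1) ^ e = (e + 1) * (b - 1) ^ e + (b - 1) ^ e := by ring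
    omega

lemma key_ineq {b e : ℕ} (hb : 2 ≤ b) (he : 1 ≤ e) :
    ∀ k, e + 1 ≤ k → (k + 1) * (b - 1) ^ e < b ^ k := by
  intro k
  induction k with
  | zero => omega
  | succ k ih =>
    intro hk
    rcases eq_or_lt_of_le hk with h1 | h2
    · rw [← h1]; exact key_base hb he
    · have hk' : e + 1 ≤ k := by omega
      have h3 := ih hk'
      have h4 : (k + 1 + 1) * (b - 1) ^ e ≤ 2 * ((k + 1) * (b - 1) ^ e) := by
        have h5 : 1 ≤ (b - 1) ^ e := Nat.one_le_pow _ _ (by omega)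
        nlinarith
      have h6 : 2 * b ^ k ≤ b ^ (k + 1) := by
        rw [pow_succ]
        have : 0 < b ^ k := Nat.pow_pos (by omega)
        nlinarith
      omega

lemma S_le_len {b e : ℕ} (hb : 2 ≤ b) (x : ℕ) :
    S e b x ≤ (Nat.digits b x).length * (b - 1) ^ e := by
  have h := List.sum_le_card_nsmul ((Nat.digits b x).map (fun a => a ^ e)) ((b - 1) ^ e) ?_
  · simpa [S, mul_comm] using h
  · intro y hy
    simp only [List.mem_map] at hy
    obtain ⟨d, hd, rfl⟩ := hy
    have : d < b := Nat.digits_lt_base (by omega) hd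
    exact Nat.pow_le_pow_left (by omega) e

/-- Any point periodic under `S e b` is less than `b ^ (e + 1)`. -/
lemma cycle_small {b e u h : ℕ} (hb : 2 ≤ b) (he : 1 ≤ e) (hh : 1 ≤ h) (hu : 1 ≤ u)
    (hcyc : (S e b)^[h] u = u) : u < b ^ (e + 1) := by
  by_contra hcon
  push_neg at hcon
  classical
  set C : Finset ℕ := (Finset.range h).image (fun n => (S e b)^[n] u) with hC
  have hne : C.Nonempty := ⟨u, by
    simp only [hC, Finset.mem_image]
    exact ⟨0, Finset.mem_range.mpr (by omega), rfl⟩⟩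
  set w := C.max' hne with hw
  have huC : u ∈ C := by
    simp only [hC, Finset.mem_image]
    exact ⟨0, Finset.mem_range.mpr (by omega), rfl⟩
  have huw : u ≤ w := Finset.le_max' C u huC
  obtain ⟨n, hn, hwn⟩ : ∃ n, n < h ∧ (S e b)^[n] u = w := by
    have := C.max'_mem hne
    simp only [hC, Finset.mem_image, Finset.mem_range] at this
    obtain ⟨n, hn, hwn⟩ := this
    exact ⟨n, hn, hwn⟩
  -- w = S x for some x ∈ C
  obtain ⟨x, hxC, hSx⟩ : ∃ x, x ∈ C ∧ S e b x = w := by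
    rcases Nat.eq_zero_or_pos n with rfl | hn0
    · refine ⟨(S e b)^[h - 1] u, ?_, ?_⟩
      · simp only [hC, Finset.mem_image, Finset.mem_range]
        exact ⟨h - 1, by omega, rfl⟩
      · have h1 : (S e b)^[h - 1 + 1] u = S e b ((S e b)^[h - 1] u) :=
          Function.iterate_succ_apply' (S e b) (h - 1) u
        have h2 : h - 1 + 1 = h := by omega
        rw [h2] at h1
        simp only [Function.iterate_zero_apply] at hwn
        rw [← hwn]
        exact h1.symm.trans hcyc
    · refine ⟨(S e b)^[n - 1] u, ?_, ?_⟩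
      · simp only [hC, Finset.mem_image, Finset.mem_range]
        exact ⟨n - 1, by omega, rfl⟩
      · have h1 : (S e b)^[n - 1 + 1] u = S e b ((S e b)^[n - 1] u) :=
          Function.iterate_succ_apply' (S e b) (n - 1) u
        have h2 : n - 1 + 1 = n := by omega
        rw [h2] at h1
        rw [← hwn]
        exact h1.symm
  have hxw : x ≤ w := Finset.le_max' C x hxC
  have hw0 : w ≠ 0 := by omega
  set L := (Nat.digits b w).length with hL
  have hwlt : w < b ^ L := Nat.lt_base_pow_length_digits (by omega)
  have hble : b ^ L ≤ b * w := Nat.base_pow_length_digits_le b w (by omega) hw0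
  have hLe : e + 1 < L := by
    have : b ^ (e + 1) < b ^ L := by
      calc b ^ (e + 1) ≤ u := hcon
        _ ≤ w := huw
        _ < b ^ L := hwlt
    exact (Nat.pow_lt_pow_iff_right (by omega)).mp this
  have hL1 : b ^ (L - 1) ≤ w := by
    have hLL : L = (L - 1) + 1 := by omega
    rw [hLL, pow_succ'] at hble
    exact Nat.le_of_mul_le_mul_left hble (by omega)
  have hwle : w ≤ L * (b - 1) ^ e := by
    calc w = S e b x := hSx.symm
      _ ≤ (Nat.digits b x).length * (b - 1) ^ e := S_le_len hb x
      _ ≤ L * (b - 1) ^ e := by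
          apply Nat.mul_le_mul_right
          rw [hL]
          exact Nat.le_digits_len_le b x w hxw
  have hkey := key_ineq hb he (L - 1) (by omega)
  have : L = (L - 1) + 1 := by omega
  rw [this] at hwle
  omega

theorem stmt_4 (b e u g h p σ : ℕ) (hb : 2 ≤ b) (he : 1 ≤ e) (hu : 1 ≤ u) (hg : 1 ≤ g)
    (hh : 1 ≤ h)
    (hwaring : ∀ m : ℕ, ∃ f : Fin g → ℕ, ∑ i, (f i) ^ e = m)
    (hp : b ^ p > g) (hpmin : ∀ q : ℕ, b ^ q > g → p ≤ q)
    (hσ : IsHeightAttracted e b u h σ)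
    (hσmin : ∀ z : ℕ, IsHeightAttracted e b u h z → σ ≤ z)
    (hlen : e + p < (Nat.digits b σ).length)
    (hdigits : ∀ i : ℕ, i ≤ e + p → (Nat.digits b σ).getD i 0 = b - 1) :
    ∀ z : ℕ, IsHeightAttracted e b u h z → z ≠ σ → σ + g * (b - 1) ^ e ≤ z := by
  intro z hz hne
  by_contra hcon
  push_neg at hcon
  have hσz : σ < z := lt_of_le_of_ne (hσmin z hz) (Ne.symm hne)
  have hp1 : 1 ≤ p := by
    rcases Nat.eq_zero_or_pos p with rfl | h1
    · simp at hp; omega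
    · exact h1
  have hmodall : ∀ k, k ≤ e + p + 1 → σ % b ^ k + 1 = b ^ k := by
    intro k
    induction k with
    | zero => intro _; simp [Nat.mod_one]
    | succ k ih =>
      intro hk
      have hdig : σ / b ^ k % b = b - 1 := by
        rw [← getD_digits hb k σ]
        exact hdigits k (by omega)
      have h1 := ih (by omega)
      rw [pow_succ, Nat.mod_mul, hdig]
      have hbk : 1 ≤ b ^ k := Nat.one_le_pow _ _ (by omega)
      have h2 : b ^ k * (b - 1) + b ^ k = b ^ k * b := by
        rw [← Nat.mul_succ]
        congr 1
        omega
      omega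
  have hGle : g * (b - 1) ^ e ≤ b ^ (e + p) := by
    calc g * (b - 1) ^ e ≤ b ^ p * b ^ e :=
          Nat.mul_le_mul (by omega) (Nat.pow_le_pow_left (by omega) e)
      _ = b ^ (e + p) := by rw [← pow_add, Nat.add_comm]
  obtain ⟨T, hσeq⟩ : ∃ T, σ + 1 = b ^ (e + p + 1) * (T + 1) := by
    refine ⟨σ / b ^ (e + p + 1), ?_⟩
    have hdm := Nat.div_add_mod σ (b ^ (e + p + 1))
    have hm := hmodall (e + p + 1) le_rfl
    rw [Nat.mul_succ]
    omega
  obtain ⟨r, hrlt, hzeq⟩ : ∃ r, r + 1 < b ^ (e + p) ∧ z = r + b ^ (e + p + 1) * (T + 1) := by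
    refine ⟨z - σ - 1, by omega, by omega⟩
  have hrB : r < b ^ (e + p + 1) := by
    have : b ^ (e + p) ≤ b ^ (e + p + 1) := Nat.pow_le_pow_right (by omega) (by omega)
    omega
  have hSz : S e b z = S e b r + S e b (T + 1) := by
    rw [hzeq]; exact S_split hb he (e + p + 1) r (T + 1) hrB
  have hSy : S e b (r + b ^ (e + p) * (T + 1)) = S e b r + S e b (T + 1) :=
    S_split hb he (e + p) r (T + 1) (by omega)
  have hSyz : S e b (r + b ^ (e + p) * (T + 1)) = S e b z := by rw [hSy, hSz]
  have hy0 : 0 < r + b ^ (e + p) * (T + 1) := by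
    have h0 : 0 < b ^ (e + p) * (T + 1) :=
      Nat.mul_pos (Nat.pow_pos (by omega)) (by omega)
    omega
  have hyσ : r + b ^ (e + p) * (T + 1) < σ := by
    have hexp : b ^ (e + p) * (T + 2) = b ^ (e + p) * (T + 1) + b ^ (e + p) := by ring
    have h2 : b ^ (e + p) * (T + 2) ≤ b ^ (e + p + 1) * (T + 1) := by
      have hBe : b ^ (e + p + 1) * (T + 1) = b ^ (e + p) * (b * (T + 1)) := by
        rw [pow_succ, mul_assoc]
      rw [hBe]
      refine Nat.mul_le_mul le_rfl ?_
      have : 2 * (T + 1) ≤ b * (T + 1) := Nat.mul_le_mul hb le_rfl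
      omega
    omega
  have hitz : ∀ m : ℕ,
      (S e b)^[m + 1] (r + b ^ (e + p) * (T + 1)) = (S e b)^[m + 1] z := by
    intro m
    rw [Function.iterate_succ_apply, Function.iterate_succ_apply, hSyz]
  have hyu : r + b ^ (e + p) * (T + 1) ≠ u := by
    intro hyu
    have hSu : S e b u = S e b z := by rw [← hyu]; exact hSyz
    have hcyc : (S e b)^[h] u = u := by
      have h1 : (S e b)^[h] u = (S e b)^[h] z := by
        have hh1 : h = (h - 1) + 1 := by omega
        rw [hh1, Function.iterate_succ_apply, Function.iterate_succ_apply, hSu]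
      rw [h1]; exact hz.2.1
    have hsmall := cycle_small hb he hh hu hcyc
    have h1 : b ^ (e + p) * 1 ≤ b ^ (e + p) * (T + 1) := Nat.mul_le_mul le_rfl (by omega)
    have h1' : b ^ (e + p) * 1 = b ^ (e + p) := mul_one _
    have h2 : b ^ (e + 1) ≤ b ^ (e + p) := Nat.pow_le_pow_right (by omega) (by omega)
    omega
  have hyatt : IsHeightAttracted e b u h (r + b ^ (e + p) * (T + 1)) := by
    refine ⟨hy0, ?_, ?_⟩
    · have h1 : (S e b)^[h] (r + b ^ (e + p) * (T + 1)) = (S e b)^[h] z := by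
        have hh1 : h = (h - 1) + 1 := by omega
        rw [hh1]
        exact hitz (h - 1)
      rw [h1]; exact hz.2.1
    · intro n hn
      cases n with
      | zero => simpa using hyu
      | succ m => rw [hitz m]; exact hz.2.2 _ hn
  have := hσmin _ hyatt
  omega
end
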